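/- Every triangle in the shadow graph of a 3-uniform hypergraph is the core of a Berge triangle unless the triangle's vertex set is itself a hyperedge containing at least two light edges. Precisely: let H be a 3-uniform hypergraph and u, v, w distinct vertices such that each of uv, vw, uw is contained in some hyperedge. If there do not exist three distinct hyperedges h_1, h_2, h_3 with {u,v} ⊆ h_1, {v,w} ⊆ h_2, {u,w} ⊆ h_3, then {u,v,w} ∈ H and at least two of the three pairs uv, vw, uw are contained in exactly one hyperedge of H. -/

import Mathlib

attribute [local instance] Classical.propDecidable

/-- Every triangle in the shadow graph of a 3-uniform hypergraph is the core of a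
Berge triangle, unless the triangle's vertex set is itself a hyperedge containing at
least two light edges.  Here a pair is light if exactly one hyperedge contains it. -/
theorem triangle_core_or_light {V : Type*} (H : Finset (Finset V))
    (huniform : ∀ h ∈ H, h.card = 3)
    (u v w : V) (huv : u ≠ v) (hvw : v ≠ w) (huw : u ≠ w)
    (h1 : ∃ h ∈ H, u ∈ h ∧ v ∈ h) (h2 : ∃ h ∈ H, v ∈ h ∧ w ∈ h)
    (h3 : ∃ h ∈ H, u ∈ h ∧ w ∈ h)
    (hnoberge : ¬ ∃ (e₁ e₂ e₃ : Finset V), e₁ ∈ H ∧ e₂ ∈ H ∧ e₃ ∈ H ∧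
      e₁ ≠ e₂ ∧ e₂ ≠ e₃ ∧ e₁ ≠ e₃ ∧
      u ∈ e₁ ∧ v ∈ e₁ ∧ v ∈ e₂ ∧ w ∈ e₂ ∧ u ∈ e₃ ∧ w ∈ e₃) :
    ({u, v, w} : Finset V) ∈ H ∧
      (((H.filter (fun h => u ∈ h ∧ v ∈ h)).card = 1 ∧
          (H.filter (fun h => v ∈ h ∧ w ∈ h)).card = 1) ∨
        ((H.filter (fun h => u ∈ h ∧ v ∈ h)).card = 1 ∧
          (H.filter (fun h => u ∈ h ∧ w ∈ h)).card = 1) ∨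
        ((H.filter (fun h => v ∈ h ∧ w ∈ h)).card = 1 ∧
          (H.filter (fun h => u ∈ h ∧ w ∈ h)).card = 1)) := by
  classical
  set T : Finset V := {u, v, w} with hT
  have hcardT : T.card = 3 := by
    rw [hT]
    rw [Finset.card_insert_of_notMem (by simp [huv, huw]),
      Finset.card_insert_of_notMem (by simp [hvw]), Finset.card_singleton]
  have heqT : ∀ h ∈ H, u ∈ h → v ∈ h → w ∈ h → h = T := by
    intro h hH hu hv hw
    have hsub : T ⊆ h := by
      intro x hx
      simp only [hT, Finset.mem_insert, Finset.mem_singleton] at hx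
      rcases hx with rfl | rfl | rfl <;> assumption
    exact (Finset.eq_of_subset_of_card_le hsub (by rw [huniform h hH, hcardT])).symm
  obtain ⟨a, haH, hau, hav⟩ := h1
  obtain ⟨b, hbH, hbv, hbw⟩ := h2
  obtain ⟨c, hcH, hcu, hcw⟩ := h3
  have hTH : T ∈ H := by
    by_contra hTH
    refine hnoberge ⟨a, b, c, haH, hbH, hcH, ?_, ?_, ?_, hau, hav, hbv, hbw, hcu, hcw⟩
    · intro h; subst h; exact hTH (heqT a haH hau hav hbw ▸ haH)
    · intro h; subst h; exact hTH (heqT b hbH hcu hbv hbw ▸ hbH)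
    · intro h; subst h; exact hTH (heqT a haH hau hav hcw ▸ haH)
  set A := H.filter (fun h => u ∈ h ∧ v ∈ h) with hA
  set B := H.filter (fun h => v ∈ h ∧ w ∈ h) with hB
  set C := H.filter (fun h => u ∈ h ∧ w ∈ h) with hC
  have hTA : T ∈ A := by rw [hA, Finset.mem_filter]; exact ⟨hTH, by simp [hT]⟩
  have hTB : T ∈ B := by rw [hB, Finset.mem_filter]; exact ⟨hTH, by simp [hT]⟩
  have hTC : T ∈ C := by rw [hC, Finset.mem_filter]; exact ⟨hTH, by simp [hT]⟩
  have hA1 : 1 ≤ A.card := Finset.card_pos.mpr ⟨T, hTA⟩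
  have hB1 : 1 ≤ B.card := Finset.card_pos.mpr ⟨T, hTB⟩
  have hC1 : 1 ≤ C.card := Finset.card_pos.mpr ⟨T, hTC⟩
  -- extractors
  have getA : 2 ≤ A.card → ∃ a, a ∈ H ∧ u ∈ a ∧ v ∈ a ∧ a ≠ T := by
    intro h
    obtain ⟨x, hx, hxT⟩ := Finset.exists_mem_ne (s := A) (by omega) T
    rw [hA, Finset.mem_filter] at hx
    exact ⟨x, hx.1, hx.2.1, hx.2.2, hxT⟩
  have getB : 2 ≤ B.card → ∃ b, b ∈ H ∧ v ∈ b ∧ w ∈ b ∧ b ≠ T := by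
    intro h
    obtain ⟨x, hx, hxT⟩ := Finset.exists_mem_ne (s := B) (by omega) T
    rw [hB, Finset.mem_filter] at hx
    exact ⟨x, hx.1, hx.2.1, hx.2.2, hxT⟩
  have getC : 2 ≤ C.card → ∃ c, c ∈ H ∧ u ∈ c ∧ w ∈ c ∧ c ≠ T := by
    intro h
    obtain ⟨x, hx, hxT⟩ := Finset.exists_mem_ne (s := C) (by omega) T
    rw [hC, Finset.mem_filter] at hx
    exact ⟨x, hx.1, hx.2.1, hx.2.2, hxT⟩
  have hAB : ¬ (2 ≤ A.card ∧ 2 ≤ B.card) := by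
    rintro ⟨ha, hb⟩
    obtain ⟨a', haH', hau', hav', haT'⟩ := getA ha
    obtain ⟨b', hbH', hbv', hbw', hbT'⟩ := getB hb
    have hab : a' ≠ b' := by
      intro h; subst h
      exact haT' (heqT a' haH' hau' hav' hbw')
    exact hnoberge ⟨a', b', T, haH', hbH', hTH, hab, hbT', haT',
      hau', hav', hbv', hbw', by simp [hT], by simp [hT]⟩
  have hAC : ¬ (2 ≤ A.card ∧ 2 ≤ C.card) := by
    rintro ⟨ha, hc⟩
    obtain ⟨a', haH', hau', hav', haT'⟩ := getA ha
    obtain ⟨c', hcH', hcu', hcw', hcT'⟩ := getC hc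
    have hac : a' ≠ c' := by
      intro h; subst h
      exact haT' (heqT a' haH' hau' hav' hcw')
    exact hnoberge ⟨a', T, c', haH', hTH, hcH', haT', hcT'.symm, hac,
      hau', hav', by simp [hT], by simp [hT], hcu', hcw'⟩
  have hBC : ¬ (2 ≤ B.card ∧ 2 ≤ C.card) := by
    rintro ⟨hb, hc⟩
    obtain ⟨b', hbH', hbv', hbw', hbT'⟩ := getB hb
    obtain ⟨c', hcH', hcu', hcw', hcT'⟩ := getC hc
    have hbc : b' ≠ c' := by
      intro h; subst h
      exact hbT' (heqT b' hbH' hcu' hbv' hbw')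
    exact hnoberge ⟨T, b', c', hTH, hbH', hcH', (Ne.symm hbT'), hbc, (Ne.symm hcT'),
      by simp [hT], by simp [hT], hbv', hbw', hcu', hcw'⟩
  refine ⟨hTH, ?_⟩
  by_cases ha2 : 2 ≤ A.card
  · have hb : B.card = 1 := by
      have := fun h => hAB ⟨ha2, h⟩; omega
    have hc : C.card = 1 := by
      have := fun h => hAC ⟨ha2, h⟩; omega
    exact Or.inr (Or.inr ⟨hb, hc⟩)
  · have ha : A.card = 1 := by omega
    by_cases hb2 : 2 ≤ B.card
    · have hc : C.card = 1 := by
        have := fun h => hBC ⟨hb2, h⟩; omega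
      exact Or.inr (Or.inl ⟨ha, hc⟩)
    · exact Or.inl ⟨ha, by omega⟩
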